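/- Let q be an odd prime power and let g be an integer with g ≥ (q−1)/2 and gcd(2g+2, q−1) > 2. Then there exists a ∈ F_q, a ≠ 0, such that the polynomial f(X) = X^{2g+2} − X^{2g+2−(q−1)} + a² ∈ F_q[X] is squarefree; moreover f(x) = a², a nonzero square, for every x ∈ F_q (so y² = f(x) is a smooth F_q-maximal hyperelliptic curve of genus g over F_q). -/

import Mathlib

open Polynomial

/-- For `q` odd, `g ≥ (q−1)/2` and `gcd(2g+2, q−1) > 2`, there is `a ≠ 0` in `F_q`
such that `X^{2g+2} − X^{2g+2−(q−1)} + a²` is squarefree, and its value at every `x ∈ F_q`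
is `a²`. -/
theorem stmt_4 (K : Type*) [Field K] [Fintype K] (hodd : Odd (Fintype.card K))
    (q : ℕ) (hq : Fintype.card K = q)
    (g : ℕ) (hg : g ≥ (q - 1) / 2) (hgcd : 2 < Nat.gcd (2 * g + 2) (q - 1)) :
    ∃ a : K, a ≠ 0 ∧
      Squarefree ((X : Polynomial K) ^ (2 * g + 2)
          - X ^ (2 * g + 2 - (q - 1)) + C (a ^ 2)) ∧
      ∀ x : K, ((X : Polynomial K) ^ (2 * g + 2)
          - X ^ (2 * g + 2 - (q - 1)) + C (a ^ 2)).eval x = a ^ 2 := by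
  classical
  have hq2 : 2 ≤ q := hq ▸ Fintype.one_lt_card
  have hoddq : Odd q := hq ▸ hodd
  obtain ⟨k, hk⟩ := hoddq
  set n : ℕ := 2 * g + 2 with hn
  set m : ℕ := n - (q - 1) with hm
  set d : ℕ := Nat.gcd n (q - 1) with hd
  have hd3 : 3 ≤ d := hgcd
  have hdq : d ∣ q - 1 := Nat.gcd_dvd_right _ _
  have hq4 : 4 ≤ q := by
    have := Nat.le_of_dvd (by omega) hdq
    omega
  have h2g : q - 1 ≤ 2 * g := by omega
  have hnm : n = m + (q - 1) := by omega
  have hm2 : 2 ≤ m := by omega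
  have hdm : Nat.gcd m (q - 1) = d := by
    conv_rhs => rw [hd, hnm]
    rw [Nat.gcd_add_self_left]
  have hdvdm : d ∣ m := hdm ▸ Nat.gcd_dvd_left m (q - 1)
  have hqK : ((q : ℕ) : K) = 0 := by rw [← hq]; exact FiniteField.cast_card_eq_zero K
  have hq1K : ((q - 1 : ℕ) : K) = -1 := by
    rw [Nat.cast_sub (by omega)]; simp [hqK]
  have hmK : (m : K) = (n : K) + 1 := by
    have h1 : ((n : ℕ) : K) = ((m : ℕ) : K) + ((q - 1 : ℕ) : K) := by
      rw [hnm]; push_cast; ring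
    rw [hq1K] at h1
    linear_combination -h1
  -- evaluation statement
  have heval : ∀ (a x : K),
      eval x ((X : Polynomial K) ^ n - X ^ m + C (a ^ 2)) = a ^ 2 := by
    intro a x
    simp only [eval_add, eval_sub, eval_pow, eval_X, eval_C]
    by_cases hx : x = 0
    · subst hx
      rw [zero_pow (by omega : n ≠ 0), zero_pow (by omega : m ≠ 0)]
      ring
    · have h1 : x ^ (q - 1) = 1 := by
        rw [← hq]; exact FiniteField.pow_card_sub_one_eq_one x hx
      rw [hnm, pow_add, h1, mul_one]
      ring
  set c : K := (m : K) / (n : K) with hc_def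
  set v : K → K := fun t => -(t ^ (m / d)) / (n : K) with hv_def
  have hinj : Function.Injective (algebraMap K (AlgebraicClosure K)) :=
    (algebraMap K (AlgebraicClosure K)).injective
  -- the key common-root analysis
  have key : ∀ a : K, a ≠ 0 → ∀ β : AlgebraicClosure K,
      aeval β ((X : Polynomial K) ^ n - X ^ m + C (a ^ 2)) = 0 →
      aeval β (derivative ((X : Polynomial K) ^ n - X ^ m + C (a ^ 2))) = 0 →
      ∃ t : K, t ^ ((q - 1) / d) = c ∧ a ^ 2 = v t := by
    intro a ha0 β hf hf'
    have hder : derivative ((X : Polynomial K) ^ n - X ^ m + C (a ^ 2))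
        = C (n : K) * X ^ (n - 1) - C (m : K) * X ^ (m - 1) := by
      simp [derivative_X_pow, derivative_pow, derivative_C]
    rw [hder] at hf'
    simp only [map_add, map_sub, map_mul, map_pow, aeval_X, aeval_C] at hf hf'
    -- β ≠ 0
    have hβ0 : β ≠ 0 := by
      intro h
      rw [h, zero_pow (by omega : n ≠ 0), zero_pow (by omega : m ≠ 0)] at hf
      simp only [sub_zero, zero_add] at hf
      exact ha0 (pow_eq_zero_iff (by norm_num : 2 ≠ 0) |>.mp (hinj (by simpa using hf)))
    have hsplit : β ^ (n - 1) = β ^ (m - 1) * β ^ (q - 1) := by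
      rw [← pow_add]; congr 1; omega
    rw [hsplit] at hf'
    have hmb : β ^ (m - 1) ≠ 0 := pow_ne_zero _ hβ0
    have hkey : algebraMap K (AlgebraicClosure K) (n : K) * β ^ (q - 1)
        = algebraMap K (AlgebraicClosure K) (m : K) := by
      apply mul_right_cancel₀ hmb
      linear_combination hf'
    have hn0K : (n : K) ≠ 0 := by
      intro h
      have hm1 : (m : K) = 1 := by rw [hmK, h, zero_add]
      rw [h, map_zero, zero_mul, hm1, map_one] at hkey
      exact one_ne_zero hkey.symm
    have hφn : algebraMap K (AlgebraicClosure K) (n : K) ≠ 0 :=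
      (map_ne_zero_iff _ hinj).mpr hn0K
    have hm0K : (m : K) ≠ 0 := by
      intro h
      rw [h, map_zero] at hkey
      exact (mul_ne_zero hφn (pow_ne_zero _ hβ0)) hkey
    have hc0 : c ≠ 0 := div_ne_zero hm0K hn0K
    have hc : β ^ (q - 1) = algebraMap K (AlgebraicClosure K) c := by
      rw [hc_def, map_div₀, eq_div_iff hφn]
      linear_combination hkey
    -- value equation : β ^ m = algebraMap s, with s = -(n * a^2)
    have hs : β ^ m = algebraMap K (AlgebraicClosure K) (-((n : K) * a ^ 2)) := by
      rw [hnm, pow_add, hc] at hf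
      have hc1 : algebraMap K (AlgebraicClosure K) c - 1
          = (algebraMap K (AlgebraicClosure K) (n : K))⁻¹ := by
        rw [← map_one (algebraMap K (AlgebraicClosure K)), ← map_sub, ← map_inv₀]
        congr 1
        rw [hc_def, hmK]
        field_simp
        ring
      have h2 : β ^ m * (algebraMap K (AlgebraicClosure K) c - 1)
          = - algebraMap K (AlgebraicClosure K) (a ^ 2) := by
        rw [map_pow]
        linear_combination hf
      rw [hc1] at h2
      have hn0L : ((n : ℕ) : AlgebraicClosure K) ≠ 0 := by
        rw [← map_natCast (algebraMap K (AlgebraicClosure K))]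
        exact hφn
      rw [map_neg, map_mul, map_pow, map_natCast]
      field_simp [hn0L] at h2
      simp only [map_pow, map_natCast] at h2
      linear_combination h2
    set s : K := -((n : K) * a ^ 2) with hs_def
    have hs0 : s ≠ 0 := by
      simp only [hs_def, neg_ne_zero]
      exact mul_ne_zero hn0K (pow_ne_zero 2 ha0)
    set x : ℤ := Nat.gcdA m (q - 1) with hx_def
    set y : ℤ := Nat.gcdB m (q - 1) with hy_def
    have hbez : (d : ℤ) = (m : ℤ) * x + ((q - 1 : ℕ) : ℤ) * y := by
      rw [← hdm]; exact Nat.gcd_eq_gcd_ab m (q - 1)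
    refine ⟨s ^ x * c ^ y, ?_, ?_⟩
    · -- t ^ ((q-1)/d) = c
      apply hinj
      have hβd : algebraMap K (AlgebraicClosure K) (s ^ x * c ^ y) = β ^ (d : ℤ) := by
        rw [map_mul, map_zpow₀, map_zpow₀, ← hs, ← hc, ← zpow_natCast β m,
          ← zpow_natCast β (q - 1), ← zpow_mul, ← zpow_mul, ← zpow_add₀ hβ0, ← hbez]
      rw [map_pow, hβd, ← zpow_natCast (β ^ (d : ℤ)), ← zpow_mul]
      have : (d : ℤ) * (((q - 1) / d : ℕ) : ℤ) = ((q - 1 : ℕ) : ℤ) := by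
        rw [← Nat.cast_mul, Nat.mul_div_cancel' hdq]
      rw [this, zpow_natCast, hc]
    · -- a ^ 2 = v t
      have ht2 : (s ^ x * c ^ y) ^ (m / d) = s := by
        apply hinj
        have hβd : algebraMap K (AlgebraicClosure K) (s ^ x * c ^ y) = β ^ (d : ℤ) := by
          rw [map_mul, map_zpow₀, map_zpow₀, ← hs, ← hc, ← zpow_natCast β m,
            ← zpow_natCast β (q - 1), ← zpow_mul, ← zpow_mul, ← zpow_add₀ hβ0, ← hbez]
        rw [map_pow, hβd, ← zpow_natCast (β ^ (d : ℤ)), ← zpow_mul]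
        have : (d : ℤ) * ((m / d : ℕ) : ℤ) = ((m : ℕ) : ℤ) := by
          rw [← Nat.cast_mul, Nat.mul_div_cancel' hdvdm]
        rw [this, zpow_natCast, hs]
      rw [hv_def]
      simp only
      rw [ht2, hs_def]
      field_simp
  -- counting argument: avoid the bad set
  have hP0 : ((X : Polynomial K) ^ ((q - 1) / d) - C c) ≠ 0 :=
    X_pow_sub_C_ne_zero (Nat.div_pos (Nat.le_of_dvd (by omega) hdq) (by omega)) c
  set T : Finset K := ((X : Polynomial K) ^ ((q - 1) / d) - C c).roots.toFinset with hT_def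
  set Bad : Finset K :=
    T.biUnion (fun t => ((X : Polynomial K) ^ 2 - C (v t)).roots.toFinset) with hBad_def
  have hTcard : T.card ≤ (q - 1) / d := by
    refine le_trans (Multiset.toFinset_card_le _) (le_trans (card_roots' _) ?_)
    rw [natDegree_X_pow_sub_C]
  have hBadcard : Bad.card ≤ (q - 1) / d * 2 := by
    refine le_trans Finset.card_biUnion_le ?_
    calc ∑ t ∈ T, ((X : Polynomial K) ^ 2 - C (v t)).roots.toFinset.card
        ≤ ∑ _t ∈ T, 2 := by
          refine Finset.sum_le_sum fun t _ => ?_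
          refine le_trans (Multiset.toFinset_card_le _) (le_trans (card_roots' _) ?_)
          rw [natDegree_X_pow_sub_C]
      _ = T.card * 2 := by rw [Finset.sum_const, smul_eq_mul]
      _ ≤ (q - 1) / d * 2 := by omega
  have hlt : (insert (0 : K) Bad).card < Fintype.card K := by
    have h1 : (insert (0 : K) Bad).card ≤ Bad.card + 1 := Finset.card_insert_le _ _
    have h2 : (q - 1) / d ≤ (q - 1) / 3 := Nat.div_le_div_left hd3 (by norm_num)
    rw [hq]
    omega
  obtain ⟨a, ha⟩ : ∃ a : K, a ∉ insert (0 : K) Bad := by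
    by_contra h
    push_neg at h
    have hsub : (Finset.univ : Finset K) ⊆ insert (0 : K) Bad := fun x _ => h x
    have := Finset.card_le_card hsub
    rw [Finset.card_univ] at this
    omega
  have ha0 : a ≠ 0 := fun h => ha (h ▸ Finset.mem_insert_self 0 Bad)
  refine ⟨a, ha0, ?_, heval a⟩
  have hsep : ((X : Polynomial K) ^ n - X ^ m + C (a ^ 2)).Separable := by
    rw [separable_def]
    refine (Polynomial.isCoprime_iff_aeval_ne_zero_of_isAlgClosed K
      (AlgebraicClosure K) ((X : Polynomial K) ^ n - X ^ m + C (a ^ 2))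
      (derivative ((X : Polynomial K) ^ n - X ^ m + C (a ^ 2)))).mpr fun β => ?_
    by_contra hcon
    push_neg at hcon
    obtain ⟨t, ht1, ht2⟩ := key a ha0 β hcon.1 hcon.2
    apply ha
    refine Finset.mem_insert_of_mem ?_
    rw [hBad_def]
    refine Finset.mem_biUnion.mpr ⟨t, ?_, ?_⟩
    · rw [hT_def, Multiset.mem_toFinset, mem_roots hP0]
      simp [IsRoot.def, ht1]
    · rw [Multiset.mem_toFinset,
        mem_roots (X_pow_sub_C_ne_zero (by norm_num) (v t))]
      simp [IsRoot.def, ht2.symm]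
  exact hsep.squarefree
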